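/- Define, for pairs of indices, M(p₁,q₁; p₂,q₂) = ρ_{p₁q₂} ρ_{q₁p₂} + ρ_{p₁p₂} ρ_{q₁q₂}, and P₁(p₁,q₁,…,p₄,q₄) = M(p₁,q₁; p₂,q₂) · M(p₃,q₃; p₄,q₄). Then there exists a universal constant C > 0 such that for every m and every m×m correlation matrix R: | Σ over all tuples with 1 ≤ p_d < q_d ≤ m (d = 1, …, 4) of P₁² − m⁴/4 | ≤ C · m³ · Σ_{k=0}^{8} ‖R − I_m‖_F^{k}. -/

import Mathlib

open Finset

noncomputable section

/-- `R` is an `m × m` (Pearson) correlation matrix: symmetric positive semidefinite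
with unit diagonal. -/
def IsCorrMatrix {m : ℕ} (R : Matrix (Fin m) (Fin m) ℝ) : Prop :=
  R.PosSemidef ∧ ∀ p, R p p = 1

/-- The Frobenius norm `‖R - I_m‖_F`. -/
def frobDistId {m : ℕ} (R : Matrix (Fin m) (Fin m) ℝ) : ℝ :=
  Real.sqrt (∑ p, ∑ q, (R p q - if p = q then (1 : ℝ) else 0) ^ 2)

/-- `M(p₁,q₁; p₂,q₂) = ρ_{p₁q₂} ρ_{q₁p₂} + ρ_{p₁p₂} ρ_{q₁q₂}`, where a pair of
indices is encoded as an element of `Fin m × Fin m`. -/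
def Mmom {m : ℕ} (R : Matrix (Fin m) (Fin m) ℝ) (x y : Fin m × Fin m) : ℝ :=
  R x.1 y.2 * R x.2 y.1 + R x.1 y.1 * R x.2 y.2

/-- `P₁(p₁,q₁,…,p₄,q₄) = M(p₁,q₁; p₂,q₂) ⬝ M(p₃,q₃; p₄,q₄)`, where the tuple of
four index pairs is encoded as `v : Fin 4 → Fin m × Fin m`. -/
def P1 {m : ℕ} (R : Matrix (Fin m) (Fin m) ℝ) (v : Fin 4 → Fin m × Fin m) : ℝ :=
  Mmom R (v 0) (v 1) * Mmom R (v 2) (v 3)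

/-! ### Auxiliary lemmas -/

lemma corr_symm {m : ℕ} {R : Matrix (Fin m) (Fin m) ℝ} (h : IsCorrMatrix R) (p q : Fin m) :
    R q p = R p q := by
  have := h.1.1.apply p q
  simpa using this

lemma corr_sq_le {m : ℕ} {R : Matrix (Fin m) (Fin m) ℝ} (h : IsCorrMatrix R) (p q : Fin m) :
    (R p q) ^ 2 ≤ 1 := by
  rcases eq_or_ne p q with rfl | hpq
  · rw [h.2 p]; norm_num
  · have hx := h.1.dotProduct_mulVec_nonneg (Pi.single p 1 + Pi.single q (-(R p q)))
    simp only [Matrix.mulVec_add, Matrix.mulVec_single, add_dotProduct,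
      single_dotProduct, star_add, star_trivial, Pi.add_apply, Pi.smul_apply, op_smul_eq_mul,
      Matrix.col_apply] at hx
    rw [h.2 p, h.2 q, corr_symm h p q] at hx
    nlinarith [hx]

/-- The dominating nonnegative function for off-diagonal terms. -/
def Gaux {m : ℕ} (e : Fin m → Fin m → ℝ) (p q p' q' : Fin m) : ℝ :=
  e p q' ^ 2 * e q p' ^ 2 + (if p = q' then e q p' ^ 2 else 0)
    + (if q = p' then e p q' ^ 2 else 0)
    + e p p' ^ 2 * e q q' ^ 2 + (if p = p' then e q q' ^ 2 else 0)
    + (if q = q' then e p p' ^ 2 else 0)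

lemma Gaux_nonneg {m : ℕ} (e : Fin m → Fin m → ℝ) (p q p' q' : Fin m) :
    0 ≤ Gaux e p q p' q' := by
  have key : ∀ (c : Prop) (inst : Decidable c) (x : ℝ), (0:ℝ) ≤ if c then x ^ 2 else 0 := by
    intro c inst x; split
    · exact sq_nonneg x
    · exact le_refl 0
  unfold Gaux
  have a1 : (0:ℝ) ≤ e p q' ^ 2 * e q p' ^ 2 := by positivity
  have a2 := key (p = q') inferInstance (e q p')
  have a3 := key (q = p') inferInstance (e p q')
  have a4 : (0:ℝ) ≤ e p p' ^ 2 * e q q' ^ 2 := by positivity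
  have a5 := key (p = p') inferInstance (e q q')
  have a6 := key (q = q') inferInstance (e p p')
  linarith

/-- Pointwise bound for the off-diagonal terms. -/
lemma point_bound {m : ℕ} (R : Matrix (Fin m) (Fin m) ℝ) (e : Fin m → Fin m → ℝ)
    (hee : ∀ p q : Fin m, p ≠ q → R p q = e p q)
    (hsq : ∀ p q : Fin m, (R p q) ^ 2 ≤ 1)
    (x y : Fin m × Fin m) (hx : x.1 < x.2) (hy : y.1 < y.2) (hxy : y ≠ x) :
    Mmom R x y ^ 2 ≤ 2 * Gaux e x.1 x.2 y.1 y.2 := by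
  obtain ⟨p, q⟩ := x
  obtain ⟨p', q'⟩ := y
  simp only at hx hy
  have hxy' : ¬ (p = p' ∧ q = q') := by
    intro ⟨h1, h2⟩; exact hxy (by simp [Prod.ext_iff, h1.symm, h2.symm])
  have hT1 : (R p q' * R q p') ^ 2
      ≤ e p q' ^ 2 * e q p' ^ 2 + (if p = q' then e q p' ^ 2 else 0)
        + (if q = p' then e p q' ^ 2 else 0) := by
    by_cases h1 : p = q' <;> by_cases h2 : q = p'
    · exact absurd (hx.trans ((h2 ▸ hy).trans_eq h1.symm)) (lt_irrefl p)
    · rw [if_pos h1, if_neg h2, hee q p' h2, mul_pow]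
      nlinarith [mul_nonneg (sub_nonneg.2 (hsq p q')) (sq_nonneg (e q p')),
        mul_nonneg (sq_nonneg (e p q')) (sq_nonneg (e q p'))]
    · rw [if_neg h1, if_pos h2, hee p q' h1, mul_pow]
      nlinarith [mul_nonneg (sub_nonneg.2 (hsq q p')) (sq_nonneg (e p q')),
        mul_nonneg (sq_nonneg (e p q')) (sq_nonneg (e q p'))]
    · rw [if_neg h1, if_neg h2, hee p q' h1, hee q p' h2, mul_pow]
      simp
  have hT2 : (R p p' * R q q') ^ 2
      ≤ e p p' ^ 2 * e q q' ^ 2 + (if p = p' then e q q' ^ 2 else 0)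
        + (if q = q' then e p p' ^ 2 else 0) := by
    by_cases h1 : p = p' <;> by_cases h2 : q = q'
    · exact absurd ⟨h1, h2⟩ hxy'
    · rw [if_pos h1, if_neg h2, hee q q' h2, mul_pow]
      nlinarith [mul_nonneg (sub_nonneg.2 (hsq p p')) (sq_nonneg (e q q')),
        mul_nonneg (sq_nonneg (e p p')) (sq_nonneg (e q q'))]
    · rw [if_neg h1, if_pos h2, hee p p' h1, mul_pow]
      nlinarith [mul_nonneg (sub_nonneg.2 (hsq q q')) (sq_nonneg (e p p')),
        mul_nonneg (sq_nonneg (e p p')) (sq_nonneg (e q q'))]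
    · rw [if_neg h1, if_neg h2, hee p p' h1, hee q q' h2, mul_pow]
      simp
  have hM : Mmom R (p, q) (p', q') = R p q' * R q p' + R p p' * R q q' := rfl
  rw [hM, Gaux]
  nlinarith [hT1, hT2, sq_nonneg (R p q' * R q p' - R p p' * R q q')]

/-- Diagonal upper bound. -/
lemma diag_ub {m : ℕ} (R : Matrix (Fin m) (Fin m) ℝ) (e : Fin m → Fin m → ℝ) (t : ℝ)
    (P : Finset (Fin m × Fin m))
    (hdiagval : ∀ x ∈ P, Mmom R x x ^ 2 = (1 + e x.1 x.2 ^ 2) ^ 2)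
    (hsubP : ∑ x ∈ P, e x.1 x.2 ^ 2 ≤ t)
    (ht0 : 0 ≤ t) :
    ∑ x ∈ P, Mmom R x x ^ 2 ≤ (P.card : ℝ) + 2 * t + t ^ 2 := by
  rw [Finset.sum_congr rfl hdiagval]
  have hexp : ∀ x ∈ P, (1 + e x.1 x.2 ^ 2) ^ 2
      = 1 + 2 * e x.1 x.2 ^ 2 + e x.1 x.2 ^ 2 * e x.1 x.2 ^ 2 := fun x _ => by ring
  rw [Finset.sum_congr rfl hexp, Finset.sum_add_distrib, Finset.sum_add_distrib,
    Finset.sum_const, ← Finset.mul_sum, nsmul_eq_mul, mul_one]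
  have h4 : ∑ x ∈ P, e x.1 x.2 ^ 2 * e x.1 x.2 ^ 2 ≤ t ^ 2 := by
    have hstep : ∀ x ∈ P, e x.1 x.2 ^ 2 * e x.1 x.2 ^ 2 ≤ e x.1 x.2 ^ 2 * t := by
      intro x hx
      refine mul_le_mul_of_nonneg_left ?_ (sq_nonneg _)
      calc e x.1 x.2 ^ 2 ≤ ∑ y ∈ P, e y.1 y.2 ^ 2 :=
            Finset.single_le_sum (fun y _ => sq_nonneg (e y.1 y.2)) hx
        _ ≤ t := hsubP
    calc ∑ x ∈ P, e x.1 x.2 ^ 2 * e x.1 x.2 ^ 2 ≤ ∑ x ∈ P, e x.1 x.2 ^ 2 * t :=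
          Finset.sum_le_sum hstep
      _ = (∑ x ∈ P, e x.1 x.2 ^ 2) * t := by rw [Finset.sum_mul]
      _ ≤ t * t := mul_le_mul_of_nonneg_right hsubP ht0
      _ = t ^ 2 := by ring
  linarith [hsubP]

/-- Total `Gaux` sum. -/
lemma Gaux_sum {m : ℕ} (e : Fin m → Fin m → ℝ) (t : ℝ) (ht : t = ∑ p, ∑ q, e p q ^ 2) :
    ∑ x : Fin m × Fin m, ∑ y : Fin m × Fin m, Gaux e x.1 x.2 y.1 y.2
      = 2 * t ^ 2 + 4 * m * t := by
  have hS1 : ∑ p, ∑ q, ∑ p', ∑ q', (e p q' ^ 2 * e q p' ^ 2) = t * t := by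
    rw [ht, Finset.sum_mul_sum]
    refine Finset.sum_congr rfl fun p _ => Finset.sum_congr rfl fun q _ => ?_
    rw [Finset.sum_comm]
    exact (Finset.sum_mul_sum Finset.univ Finset.univ (fun q' => e p q' ^ 2)
      (fun p' => e q p' ^ 2)).symm
  have hS4 : ∑ p, ∑ q, ∑ p', ∑ q', (e p p' ^ 2 * e q q' ^ 2) = t * t := by
    rw [ht, Finset.sum_mul_sum]
    refine Finset.sum_congr rfl fun p _ => Finset.sum_congr rfl fun q _ => ?_
    exact (Finset.sum_mul_sum Finset.univ Finset.univ (fun p' => e p p' ^ 2)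
      (fun q' => e q q' ^ 2)).symm
  have hS2 : ∑ p : Fin m, ∑ q : Fin m, ∑ p' : Fin m, ∑ q' : Fin m,
      (if p = q' then e q p' ^ 2 else 0) = (m:ℝ) * t := by
    simp only [Finset.sum_ite_eq, Finset.mem_univ, if_true]
    rw [show (∑ _p : Fin m, ∑ q : Fin m, ∑ p' : Fin m, e q p' ^ 2)
        = ∑ _p : Fin m, t from Finset.sum_congr rfl fun _ _ => (by rw [ht]),
      Finset.sum_const, Finset.card_univ, Fintype.card_fin, nsmul_eq_mul]
  have hS3 : ∑ p : Fin m, ∑ q : Fin m, ∑ p' : Fin m, ∑ q' : Fin m,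
      (if q = p' then e p q' ^ 2 else 0) = (m:ℝ) * t := by
    have hinner : ∀ p q : Fin m, (∑ p' : Fin m, ∑ q' : Fin m,
        if q = p' then e p q' ^ 2 else 0) = ∑ q' : Fin m, e p q' ^ 2 := by
      intro p q
      rw [Finset.sum_comm]
      simp [Finset.sum_ite_eq]
    rw [Finset.sum_congr rfl (fun p _ => Finset.sum_congr rfl fun q _ => hinner p q)]
    rw [show (∑ p : Fin m, ∑ _q : Fin m, ∑ q' : Fin m, e p q' ^ 2)
        = ∑ p : Fin m, (m:ℝ) * ∑ q' : Fin m, e p q' ^ 2 from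
      Finset.sum_congr rfl fun p _ => by
        rw [Finset.sum_const, Finset.card_univ, Fintype.card_fin, nsmul_eq_mul]]
    rw [← Finset.mul_sum, ← ht]
  have hS5 : ∑ p : Fin m, ∑ q : Fin m, ∑ p' : Fin m, ∑ q' : Fin m,
      (if p = p' then e q q' ^ 2 else 0) = (m:ℝ) * t := by
    have hinner : ∀ p q : Fin m, (∑ p' : Fin m, ∑ q' : Fin m,
        if p = p' then e q q' ^ 2 else 0) = ∑ q' : Fin m, e q q' ^ 2 := by
      intro p q
      rw [Finset.sum_comm]
      simp [Finset.sum_ite_eq]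
    rw [Finset.sum_congr rfl (fun p _ => Finset.sum_congr rfl fun q _ => hinner p q)]
    rw [show (∑ _p : Fin m, ∑ q : Fin m, ∑ q' : Fin m, e q q' ^ 2)
        = ∑ _p : Fin m, t from Finset.sum_congr rfl fun _ _ => (by rw [ht]),
      Finset.sum_const, Finset.card_univ, Fintype.card_fin, nsmul_eq_mul]
  have hS6 : ∑ p : Fin m, ∑ q : Fin m, ∑ p' : Fin m, ∑ q' : Fin m,
      (if q = q' then e p p' ^ 2 else 0) = (m:ℝ) * t := by
    simp only [Finset.sum_ite_eq, Finset.mem_univ, if_true]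
    rw [show (∑ p : Fin m, ∑ _q : Fin m, ∑ p' : Fin m, e p p' ^ 2)
        = ∑ p : Fin m, (m:ℝ) * ∑ p' : Fin m, e p p' ^ 2 from
      Finset.sum_congr rfl fun p _ => by
        rw [Finset.sum_const, Finset.card_univ, Fintype.card_fin, nsmul_eq_mul]]
    rw [← Finset.mul_sum, ← ht]
  simp only [Fintype.sum_prod_type, Gaux, Finset.sum_add_distrib]
  rw [hS1, hS2, hS3, hS4, hS5, hS6]
  ring

/-- Counting lemma. -/
lemma card_lt_pairs (m : ℕ) : 2 * ((Finset.univ : Finset (Fin m × Fin m)).filter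
    (fun x => x.1 < x.2)).card + m = m * m := by
  have hswap : ((Finset.univ : Finset (Fin m × Fin m)).filter (fun x => x.1 < x.2)).card
      = ((Finset.univ : Finset (Fin m × Fin m)).filter (fun x => x.2 < x.1)).card := by
    refine Finset.card_nbij' (fun x => (x.2, x.1)) (fun x => (x.2, x.1)) ?_ ?_ ?_ ?_ <;>
      simp [Finset.mem_filter, Set.MapsTo, Set.LeftInvOn, Set.RightInvOn]
  have hdiag : ((Finset.univ : Finset (Fin m × Fin m)).filter (fun x => x.1 = x.2)).card = m := by
    have : ((Finset.univ : Finset (Fin m × Fin m)).filter (fun x => x.1 = x.2))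
        = (Finset.univ : Finset (Fin m)).image (fun p => (p, p)) := by
      ext x
      simp only [Finset.mem_filter, Finset.mem_univ, true_and, Finset.mem_image]
      constructor
      · intro h; exact ⟨x.1, by rw [Prod.ext_iff]; exact ⟨rfl, h⟩⟩
      · rintro ⟨p, -, rfl⟩; rfl
    rw [this, Finset.card_image_of_injective _ (fun a b h => (Prod.ext_iff.1 h).1),
      Finset.card_univ, Fintype.card_fin]
  have hsplit1 : ((Finset.univ : Finset (Fin m × Fin m)).filter (fun x => x.1 < x.2)).card
      + ((Finset.univ : Finset (Fin m × Fin m)).filter (fun x => ¬ x.1 < x.2)).card = m * m := by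
    rw [Finset.card_filter_add_card_filter_not, Finset.card_univ]
    simp [Fintype.card_prod]
  have hsplit2 : ((Finset.univ : Finset (Fin m × Fin m)).filter (fun x => ¬ x.1 < x.2)).card
      = ((Finset.univ : Finset (Fin m × Fin m)).filter (fun x => x.2 < x.1)).card
        + ((Finset.univ : Finset (Fin m × Fin m)).filter (fun x => x.1 = x.2)).card := by
    rw [← Finset.card_union_of_disjoint]
    · congr 1
      ext x
      simp only [Finset.mem_filter, Finset.mem_univ, true_and, Finset.mem_union]
      constructor
      · intro h
        rcases lt_or_eq_of_le (not_lt.1 h) with h' | h'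
        · exact Or.inl h'
        · exact Or.inr h'.symm
      · rintro (h | h)
        · exact not_lt.2 h.le
        · exact not_lt.2 h.ge
    · rw [Finset.disjoint_filter]
      intro x _ h h'
      rw [h'] at h
      exact lt_irrefl _ h
  omega

/-- Final elementary real arithmetic. -/
lemma arith_main (mr n A t δ T : ℝ)
    (hm : 1 ≤ mr) (ht0 : 0 ≤ t) (hδ0 : 0 ≤ δ) (hδt : δ ^ 2 = t)
    (hn : 2 * n + mr = mr * mr) (hn0 : 0 ≤ n)
    (hAlb : n ≤ A) (hAub : A ≤ n + 2 * t + t ^ 2 + (4 * t ^ 2 + 8 * mr * t))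
    (hT : T = ∑ k ∈ Finset.range 9, δ ^ k) :
    |A * A - mr ^ 4 / 4| ≤ 1000 * mr ^ 3 * T := by
  have hm0 : (0:ℝ) ≤ mr := le_trans zero_le_one hm
  have hTlb : 1 + t + t ^ 2 + t ^ 3 + t ^ 4 ≤ T := by
    have hTexp : T = 1 + δ + δ ^ 2 + δ ^ 3 + δ ^ 4 + δ ^ 5 + δ ^ 6 + δ ^ 7 + δ ^ 8 := by
      rw [hT]; simp [Finset.sum_range_succ]
    rw [hTexp, ← hδt]
    nlinarith [hδ0, pow_nonneg hδ0 3, pow_nonneg hδ0 5, pow_nonneg hδ0 7]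
  have hB2 : (1 + t + t ^ 2) ^ 2 ≤ 3 * T := by
    nlinarith [hTlb, ht0, pow_nonneg ht0 2, pow_nonneg ht0 3, pow_nonneg ht0 4]
  have hmt : (0:ℝ) ≤ mr * t := mul_nonneg hm0 ht0
  have hmt2 : (0:ℝ) ≤ mr * t ^ 2 := mul_nonneg hm0 (pow_nonneg ht0 2)
  have hm1t : (0:ℝ) ≤ (mr * (mr - 1)) * t := mul_nonneg (mul_nonneg hm0 (by linarith)) ht0
  have hm1t2 : (0:ℝ) ≤ (mr * (mr - 1)) * t ^ 2 :=
    mul_nonneg (mul_nonneg hm0 (by linarith)) (pow_nonneg ht0 2)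
  have hUB : 2 * t + t ^ 2 + (4 * t ^ 2 + 8 * mr * t) ≤ 15 * mr * (1 + t + t ^ 2) := by
    nlinarith [hm1t, hm1t2, hmt, hmt2, hm0, hm]
  have h1 : |A - mr ^ 2 / 2| ≤ 16 * mr * (1 + t + t ^ 2) := by
    rw [abs_le]
    constructor
    · linarith [hAlb, hn, hm, hm0, hmt, hmt2]
    · linarith [hAub, hUB, hn, hm, hm0, hmt, hmt2]
  have h2 : |A + mr ^ 2 / 2| ≤ 16 * mr ^ 2 * (1 + t + t ^ 2) := by
    rw [abs_of_nonneg (by linarith [hAlb, hn0])]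
    linarith [hAub, hUB, hn, hm, hm0, hm1t, hm1t2, hmt, hmt2]
  have hT1 : (1:ℝ) ≤ T := by
    linarith [hTlb, ht0, pow_nonneg ht0 2, pow_nonneg ht0 3, pow_nonneg ht0 4]
  calc |A * A - mr ^ 4 / 4|
      = |A - mr ^ 2 / 2| * |A + mr ^ 2 / 2| := by
        rw [← abs_mul]; congr 1; ring
    _ ≤ (16 * mr * (1 + t + t ^ 2)) * (16 * mr ^ 2 * (1 + t + t ^ 2)) :=
        mul_le_mul h1 h2 (abs_nonneg _) (by positivity)
    _ = 256 * mr ^ 3 * (1 + t + t ^ 2) ^ 2 := by ring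
    _ ≤ 1000 * mr ^ 3 * T := by
        linarith [mul_nonneg (pow_nonneg hm0 3) (sub_nonneg.2 hB2),
          mul_nonneg (pow_nonneg hm0 3) (le_trans zero_le_one hT1)]

/-- There is a universal constant `C > 0` such that for every `m` and correlation
matrix `R`, the sum of `P₁²` over all tuples with `p_d < q_d` (`d = 1, …, 4`)
differs from `m⁴/4` by at most `C m³ Σ_{k=0}^{8} ‖R − I_m‖_F^k`. -/
theorem sum_P1_sq_estimate :
    ∃ C : ℝ, 0 < C ∧ ∀ (m : ℕ) (R : Matrix (Fin m) (Fin m) ℝ), IsCorrMatrix R →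
      |(∑ v ∈ (Finset.univ : Finset (Fin 4 → Fin m × Fin m)).filter
            (fun v => ∀ d, (v d).1 < (v d).2), P1 R v ^ 2)
          - (m : ℝ) ^ 4 / 4|
        ≤ C * (m : ℝ) ^ 3 * ∑ k ∈ Finset.range 9, frobDistId R ^ k := by
  classical
  refine ⟨1000, by norm_num, ?_⟩
  intro m R hR
  rcases Nat.eq_zero_or_pos m with rfl | hm1
  · simp [Finset.univ_eq_empty]
  set δ := frobDistId R with hδdef
  have hδ0 : 0 ≤ δ := Real.sqrt_nonneg _
  set e : Fin m → Fin m → ℝ := fun p q => R p q - if p = q then 1 else 0 with he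
  set t : ℝ := ∑ p, ∑ q, e p q ^ 2 with ht
  have ht0 : 0 ≤ t := Finset.sum_nonneg fun _ _ => Finset.sum_nonneg fun _ _ => sq_nonneg _
  have hδt : δ ^ 2 = t := Real.sq_sqrt ht0
  have hee : ∀ p q : Fin m, p ≠ q → R p q = e p q := by
    intro p q hpq; simp [he, if_neg hpq]
  set P : Finset (Fin m × Fin m) := Finset.univ.filter (fun x => x.1 < x.2) with hP
  set A : ℝ := ∑ x ∈ P, ∑ y ∈ P, Mmom R x y ^ 2 with hA
  -- factorization of the full sum
  have hS : (∑ v ∈ (Finset.univ : Finset (Fin 4 → Fin m × Fin m)).filter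
      (fun v => ∀ d, (v d).1 < (v d).2), P1 R v ^ 2) = A * A := by
    have h1 : (∑ v ∈ (Finset.univ : Finset (Fin 4 → Fin m × Fin m)).filter
        (fun v => ∀ d, (v d).1 < (v d).2), P1 R v ^ 2)
        = ∑ z ∈ ((P ×ˢ P) ×ˢ (P ×ˢ P)),
            Mmom R z.1.1 z.1.2 ^ 2 * Mmom R z.2.1 z.2.2 ^ 2 := by
      refine Finset.sum_nbij' (fun v => ((v 0, v 1), (v 2, v 3)))
        (fun z => ![z.1.1, z.1.2, z.2.1, z.2.2]) ?_ ?_ ?_ ?_ ?_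
      · intro v hv
        simp only [Finset.mem_filter, Finset.mem_univ, true_and] at hv
        simp [Finset.mem_product, hP, hv 0, hv 1, hv 2, hv 3]
      · intro z hz
        simp only [hP, Finset.mem_product, Finset.mem_filter, Finset.mem_univ, true_and] at hz
        simp only [Finset.mem_filter, Finset.mem_univ, true_and]
        intro d
        fin_cases d
        · exact hz.1.1
        · exact hz.1.2
        · exact hz.2.1
        · exact hz.2.2
      · intro v _
        funext d
        fin_cases d <;> rfl
      · intro z _; rfl
      · intro v _; simp [P1, mul_pow]
    rw [hA, h1, Finset.sum_product]
    dsimp only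
    rw [← Finset.sum_mul_sum]
    simp only [Finset.sum_product]
  have hcard : 2 * P.card + m = m * m := by rw [hP]; exact card_lt_pairs m
  -- sum of squares over P is at most t
  have hsubP : ∑ x ∈ P, e x.1 x.2 ^ 2 ≤ t := by
    calc ∑ x ∈ P, e x.1 x.2 ^ 2 ≤ ∑ x : Fin m × Fin m, e x.1 x.2 ^ 2 :=
          Finset.sum_le_sum_of_subset_of_nonneg (Finset.subset_univ _)
            (fun _ _ _ => sq_nonneg _)
      _ = t := by rw [ht, Fintype.sum_prod_type]
  -- diagonal values
  have hdiagval : ∀ x ∈ P, Mmom R x x ^ 2 = (1 + e x.1 x.2 ^ 2) ^ 2 := by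
    intro x hx
    have hlt : x.1 < x.2 := by simpa [hP] using hx
    have hne : x.1 ≠ x.2 := ne_of_lt hlt
    have h1 : Mmom R x x = 1 + e x.1 x.2 ^ 2 := by
      rw [Mmom, corr_symm hR x.1 x.2, hR.2, hR.2, hee x.1 x.2 hne]; ring
    rw [h1]
  have hdiag_lb : (P.card : ℝ) ≤ ∑ x ∈ P, Mmom R x x ^ 2 := by
    rw [Finset.sum_congr rfl hdiagval]
    calc (P.card : ℝ) = ∑ _x ∈ P, (1 : ℝ) := by rw [Finset.sum_const, nsmul_eq_mul, mul_one]
      _ ≤ _ := Finset.sum_le_sum fun x _ => by nlinarith [sq_nonneg (e x.1 x.2)]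
  have hdiag_ub : ∑ x ∈ P, Mmom R x x ^ 2 ≤ (P.card : ℝ) + 2 * t + t ^ 2 :=
    diag_ub R e t P hdiagval hsubP ht0
  -- off-diagonal bound
  have hpoint : ∀ x ∈ P, ∀ y ∈ P.erase x, Mmom R x y ^ 2 ≤ 2 * Gaux e x.1 x.2 y.1 y.2 := by
    intro x hx y hy
    have hx' : x.1 < x.2 := by simpa [hP] using hx
    have hy' : y.1 < y.2 := by
      have := Finset.mem_of_mem_erase hy
      simpa [hP] using this
    exact point_bound R e hee (corr_sq_le hR) x y hx' hy' (Finset.ne_of_mem_erase hy)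
  have hoff_ub : ∑ x ∈ P, ∑ y ∈ P.erase x, Mmom R x y ^ 2 ≤ 4 * t ^ 2 + 8 * m * t := by
    calc ∑ x ∈ P, ∑ y ∈ P.erase x, Mmom R x y ^ 2
        ≤ ∑ x ∈ P, ∑ y ∈ P.erase x, 2 * Gaux e x.1 x.2 y.1 y.2 :=
          Finset.sum_le_sum fun x hx => Finset.sum_le_sum fun y hy => hpoint x hx y hy
      _ ≤ ∑ x ∈ P, ∑ y : Fin m × Fin m, 2 * Gaux e x.1 x.2 y.1 y.2 :=
          Finset.sum_le_sum fun x _ => Finset.sum_le_sum_of_subset_of_nonneg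
            (Finset.subset_univ _)
            (fun y _ _ => mul_nonneg (by norm_num) (Gaux_nonneg e x.1 x.2 y.1 y.2))
      _ ≤ ∑ x : Fin m × Fin m, ∑ y : Fin m × Fin m, 2 * Gaux e x.1 x.2 y.1 y.2 :=
          Finset.sum_le_sum_of_subset_of_nonneg (Finset.subset_univ _)
            (fun x _ _ => Finset.sum_nonneg fun y _ =>
              mul_nonneg (by norm_num) (Gaux_nonneg e x.1 x.2 y.1 y.2))
      _ = 2 * ∑ x : Fin m × Fin m, ∑ y : Fin m × Fin m, Gaux e x.1 x.2 y.1 y.2 := by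
          simp only [← Finset.mul_sum]
      _ = 4 * t ^ 2 + 8 * m * t := by rw [Gaux_sum e t ht]; ring
  have hoff_lb : (0:ℝ) ≤ ∑ x ∈ P, ∑ y ∈ P.erase x, Mmom R x y ^ 2 :=
    Finset.sum_nonneg fun x _ => Finset.sum_nonneg fun y _ => sq_nonneg _
  have hsplit : A = (∑ x ∈ P, Mmom R x x ^ 2) + ∑ x ∈ P, ∑ y ∈ P.erase x, Mmom R x y ^ 2 := by
    rw [hA, ← Finset.sum_add_distrib]
    exact Finset.sum_congr rfl fun x hx => (Finset.add_sum_erase P _ hx).symm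
  have hAlb : (P.card : ℝ) ≤ A := by rw [hsplit]; linarith
  have hAub : A ≤ (P.card : ℝ) + 2 * t + t ^ 2 + (4 * t ^ 2 + 8 * m * t) := by
    rw [hsplit]; linarith
  have hn : 2 * (P.card : ℝ) + m = (m:ℝ) * m := by exact_mod_cast congrArg (Nat.cast : ℕ → ℝ) hcard
  have hm : (1:ℝ) ≤ (m:ℝ) := by exact_mod_cast hm1
  rw [hS]
  exact arith_main (m:ℝ) (P.card : ℝ) A t δ _ hm ht0 hδ0 hδt hn (by positivity) hAlb hAub rfl
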